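/- Let f : ℝ^n → ℝ and g : ℝ^n → ℝ be convex, L_f- and L_g-smooth respectively, and let A ∈ ℝ^{n×n} satisfy μ_A = λ_min(AᵀA) = λ_min(AAᵀ) > 0. Then the saddle-point operator F(x,y) = (∇f(x)+Aᵀy, ∇g(y)-Ax) is (1/R₃)-inverse Lipschitz for some R₃ > 0: there exists c > 0 with ‖F(ω)-F(ω')‖ ≥ c‖ω-ω'‖ for all ω, ω' ∈ ℝ^{2n}. -/

import Mathlib

noncomputable section
open Matrix

abbrev Evec (n : ℕ) := EuclideanSpace ℝ (Fin n)

noncomputable def qform {ι : Type*} [Fintype ι] [DecidableEq ι]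
    (M : Matrix ι ι ℝ) (v : EuclideanSpace ℝ ι) : ℝ :=
  inner ℝ (Matrix.toEuclideanLin M v) v

/-- The smallest eigenvalue of a symmetric matrix, via the Rayleigh quotient. -/
noncomputable def lambdaMin {ι : Type*} [Fintype ι] [DecidableEq ι]
    (M : Matrix ι ι ℝ) : ℝ :=
  ⨅ v : Metric.sphere (0 : EuclideanSpace ℝ ι) 1, qform M (v : EuclideanSpace ℝ ι)

lemma lambdaMin_le {ι : Type*} [Fintype ι] [DecidableEq ι]
    (M : Matrix ι ι ℝ) (v : EuclideanSpace ℝ ι) :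
    lambdaMin M * ‖v‖ ^ 2 ≤ qform M v := by
  rcases eq_or_ne v 0 with rfl | hv
  · simp [qform]
  · have hnv : (0:ℝ) < ‖v‖ := norm_pos_iff.mpr hv
    set w : EuclideanSpace ℝ ι := ‖v‖⁻¹ • v with hw
    have hwnorm : ‖w‖ = 1 := by
      rw [hw, norm_smul, norm_inv, norm_norm, inv_mul_cancel₀ hnv.ne']
    have hwmem : w ∈ Metric.sphere (0 : EuclideanSpace ℝ ι) 1 := by
      simp [hwnorm]
    have hbdd : BddBelow (Set.range fun v : Metric.sphere (0 : EuclideanSpace ℝ ι) 1 =>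
        qform M (v : EuclideanSpace ℝ ι)) := by
      refine ⟨-‖(Matrix.toEuclideanLin M).toContinuousLinearMap‖, ?_⟩
      rintro _ ⟨u, rfl⟩
      have hu : ‖(u : EuclideanSpace ℝ ι)‖ = 1 := by
        simpa using mem_sphere_zero_iff_norm.mp u.2
      have h1 : |qform M (u : EuclideanSpace ℝ ι)| ≤
          ‖Matrix.toEuclideanLin M (u : EuclideanSpace ℝ ι)‖ * ‖(u : EuclideanSpace ℝ ι)‖ :=
        abs_real_inner_le_norm _ _
      have h2 : ‖Matrix.toEuclideanLin M (u : EuclideanSpace ℝ ι)‖ ≤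
          ‖(Matrix.toEuclideanLin M).toContinuousLinearMap‖ * ‖(u : EuclideanSpace ℝ ι)‖ :=
        (Matrix.toEuclideanLin M).toContinuousLinearMap.le_opNorm _
      rw [hu] at h1 h2
      simp only [mul_one] at h1 h2
      have := neg_abs_le (qform M (u : EuclideanSpace ℝ ι))
      linarith
    have hle : lambdaMin M ≤ qform M w := ciInf_le hbdd ⟨w, hwmem⟩
    have hqw : qform M w = ‖v‖⁻¹ ^ 2 * qform M v := by
      rw [qform, hw, _root_.map_smul, real_inner_smul_left, real_inner_smul_right]
      simp [qform]
      ring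
    rw [hqw] at hle
    have := mul_le_mul_of_nonneg_right hle (sq_nonneg ‖v‖)
    calc lambdaMin M * ‖v‖ ^ 2 ≤ ‖v‖⁻¹ ^ 2 * qform M v * ‖v‖ ^ 2 := this
      _ = qform M v := by field_simp

lemma qform_transpose_mul {ι : Type*} [Fintype ι] [DecidableEq ι]
    (A : Matrix ι ι ℝ) (v : EuclideanSpace ℝ ι) :
    qform (Aᵀ * A) v = ‖Matrix.toEuclideanLin A v‖ ^ 2 := by
  have hAT : Aᵀ = Aᴴ := by ext i j; simp [Matrix.conjTranspose_apply]
  have hmul : Matrix.toEuclideanLin (Aᵀ * A) v =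
      Matrix.toEuclideanLin Aᵀ (Matrix.toEuclideanLin A v) := by
    simp [Matrix.toEuclideanLin_apply, Matrix.mulVec_mulVec]
  rw [qform, hmul, hAT, Matrix.toEuclideanLin_conjTranspose_eq_adjoint,
    LinearMap.adjoint_inner_left, real_inner_self_eq_norm_sq]

lemma inner_transpose_apply {ι : Type*} [Fintype ι] [DecidableEq ι]
    (A : Matrix ι ι ℝ) (v w : EuclideanSpace ℝ ι) :
    (inner ℝ (Matrix.toEuclideanLin Aᵀ v) w : ℝ) = inner ℝ v (Matrix.toEuclideanLin A w) := by
  have hAT : Aᵀ = Aᴴ := by ext i j; simp [Matrix.conjTranspose_apply]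
  rw [hAT, Matrix.toEuclideanLin_conjTranspose_eq_adjoint, LinearMap.adjoint_inner_left]

-- gradient continuity from Lipschitz bound
lemma grad_cont {n : ℕ} (f : Evec n → ℝ) (L : ℝ) (hL : 0 ≤ L)
    (hsmooth : ∀ x x', ‖gradient f x - gradient f x'‖ ≤ L * ‖x - x'‖) :
    Continuous (gradient f) := by
  have : LipschitzWith (Real.toNNReal L) (gradient f) := by
    apply LipschitzWith.of_dist_le_mul
    intro a b
    rw [dist_eq_norm, dist_eq_norm, Real.coe_toNNReal L hL]
    exact hsmooth a b
  exact this.continuous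

-- FTC lemma
lemma grad_ftc {n : ℕ} (f : Evec n → ℝ)
    (hdf : ∀ x, HasGradientAt f (gradient f x) x)
    (hcont : Continuous (gradient f))
    (x d : Evec n) :
    f (x + d) - f x = ∫ t in (0:ℝ)..1, (inner ℝ (gradient f (x + t • d)) d : ℝ) := by
  have key : ∀ t : ℝ, HasDerivAt (fun s : ℝ => f (x + s • d))
      (inner ℝ (gradient f (x + t • d)) d : ℝ) t := by
    intro t
    have h1 : HasDerivAt (fun s : ℝ => x + s • d) d t := by
      simpa using ((hasDerivAt_id t).smul_const d).const_add x
    have h2 := ((hdf (x + t • d)).hasFDerivAt.comp_hasDerivAt t h1)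
    convert h2 using 1
    · rfl
    · rfl
    · rfl
    · simp
  have hint : IntervalIntegrable (fun t : ℝ => (inner ℝ (gradient f (x + t • d)) d : ℝ))
      MeasureTheory.volume 0 1 := by
    apply Continuous.intervalIntegrable
    exact (Continuous.inner (hcont.comp (by continuity)) continuous_const)
  rw [intervalIntegral.integral_eq_sub_of_hasDerivAt (fun t _ => key t) hint]
  simp

-- convexity lower bound
lemma grad_lower {n : ℕ} (f : Evec n → ℝ)
    (hdf : ∀ x, HasGradientAt f (gradient f x) x)
    (hcont : Continuous (gradient f))
    (hconv : ∀ x x', (0 : ℝ) ≤ (inner ℝ (gradient f x - gradient f x') (x - x') : ℝ))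
    (x d : Evec n) :
    f x + (inner ℝ (gradient f x) d : ℝ) ≤ f (x + d) := by
  have hftc := grad_ftc f hdf hcont x d
  have hmono : ∀ t ∈ Set.Icc (0:ℝ) 1,
      (inner ℝ (gradient f x) d : ℝ) ≤ (inner ℝ (gradient f (x + t • d)) d : ℝ) := by
    intro t ht
    rcases eq_or_lt_of_le ht.1 with rfl | htpos
    · simp
    · have h0 := hconv (x + t • d) x
      have hx : (x + t • d) - x = t • d := by abel
      rw [hx, inner_smul_right] at h0
      have : (0:ℝ) ≤ (inner ℝ (gradient f (x + t • d) - gradient f x) d : ℝ) :=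
        nonneg_of_mul_nonneg_right h0 htpos
      rw [inner_sub_left] at this
      linarith
  have hci : Continuous (fun t : ℝ => (inner ℝ (gradient f (x + t • d)) d : ℝ)) :=
    (Continuous.inner (hcont.comp (by continuity)) continuous_const)
  have := intervalIntegral.integral_mono_on (a := (0:ℝ)) (b := 1)
    (μ := MeasureTheory.volume) zero_le_one
    intervalIntegrable_const (hci.intervalIntegrable 0 1) hmono
  simp only [intervalIntegral.integral_const, smul_eq_mul] at this
  linarith [hftc ▸ this]

-- descent lemma
lemma grad_descent {n : ℕ} (f : Evec n → ℝ) (L : ℝ)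
    (hdf : ∀ x, HasGradientAt f (gradient f x) x)
    (hcont : Continuous (gradient f))
    (hsmooth : ∀ x x', ‖gradient f x - gradient f x'‖ ≤ L * ‖x - x'‖)
    (x d : Evec n) :
    f (x + d) ≤ f x + (inner ℝ (gradient f x) d : ℝ) + L / 2 * ‖d‖ ^ 2 := by
  have hftc := grad_ftc f hdf hcont x d
  have hmono : ∀ t ∈ Set.Icc (0:ℝ) 1,
      (inner ℝ (gradient f (x + t • d)) d : ℝ) ≤
        (inner ℝ (gradient f x) d : ℝ) + L * ‖d‖ ^ 2 * t := by
    intro t ht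
    have h1 : (inner ℝ (gradient f (x + t • d) - gradient f x) d : ℝ) ≤
        ‖gradient f (x + t • d) - gradient f x‖ * ‖d‖ :=
      real_inner_le_norm _ _
    have h2 := hsmooth (x + t • d) x
    have hx : (x + t • d) - x = t • d := by abel
    rw [hx, norm_smul] at h2
    have h3 : ‖gradient f (x + t • d) - gradient f x‖ * ‖d‖ ≤ L * (t * ‖d‖) * ‖d‖ := by
      apply mul_le_mul_of_nonneg_right _ (norm_nonneg d)
      calc ‖gradient f (x + t • d) - gradient f x‖ ≤ L * (‖t‖ * ‖d‖) := h2
        _ = L * (t * ‖d‖) := by rw [Real.norm_eq_abs, abs_of_nonneg ht.1]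
    rw [inner_sub_left] at h1
    nlinarith [h1, h3]
  have hci : Continuous (fun t : ℝ => (inner ℝ (gradient f (x + t • d)) d : ℝ)) :=
    (Continuous.inner (hcont.comp (by continuity)) continuous_const)
  have haff : Continuous (fun t : ℝ => (inner ℝ (gradient f x) d : ℝ) + L * ‖d‖ ^ 2 * t) :=
    continuous_const.add (continuous_const.mul continuous_id)
  have hint2 : IntervalIntegrable
      (fun t : ℝ => (inner ℝ (gradient f x) d : ℝ) + L * ‖d‖ ^ 2 * t)
      MeasureTheory.volume 0 1 := haff.intervalIntegrable 0 1
  have hle := intervalIntegral.integral_mono_on (a := (0:ℝ)) (b := 1) zero_le_one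
    (hci.intervalIntegrable 0 1) hint2 hmono
  have hcomp : (∫ t in (0:ℝ)..1, ((inner ℝ (gradient f x) d : ℝ) + L * ‖d‖ ^ 2 * t)) =
      (inner ℝ (gradient f x) d : ℝ) + L * ‖d‖ ^ 2 / 2 := by
    rw [intervalIntegral.integral_add intervalIntegrable_const
      ((show Continuous (fun t : ℝ => L * ‖d‖ ^ 2 * t) from
        continuous_const.mul continuous_id).intervalIntegrable 0 1)]
    rw [intervalIntegral.integral_const_mul, integral_id]
    simp
    ring
  rw [hcomp] at hle
  linarith [hftc ▸ hle]

-- Baillon–Haddad cocoercivity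
lemma grad_cocoercive {n : ℕ} (f : Evec n → ℝ) (L : ℝ) (hL : 0 < L)
    (hdf : ∀ x, HasGradientAt f (gradient f x) x)
    (hcont : Continuous (gradient f))
    (hconv : ∀ x x', (0 : ℝ) ≤ (inner ℝ (gradient f x - gradient f x') (x - x') : ℝ))
    (hsmooth : ∀ x x', ‖gradient f x - gradient f x'‖ ≤ L * ‖x - x'‖)
    (x x' : Evec n) :
    ‖gradient f x - gradient f x'‖ ^ 2 ≤
      L * (inner ℝ (gradient f x - gradient f x') (x - x') : ℝ) := by
  have half : ∀ p q : Evec n,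
      1 / (2 * L) * ‖gradient f p - gradient f q‖ ^ 2 ≤
        f p - f q - (inner ℝ (gradient f q) (p - q) : ℝ) := by
    intro p q
    set u := gradient f p - gradient f q with hu
    have hdesc := grad_descent f L hdf hcont hsmooth p (-(1 / L) • u)
    have hlow := grad_lower f hdf hcont hconv q (p + -(1 / L) • u - q)
    have hz : q + (p + -(1 / L) • u - q) = p + -(1 / L) • u := by abel
    rw [hz] at hlow
    have e1 : (inner ℝ (gradient f p) (-(1 / L) • u) : ℝ) = -(1 / L) * inner ℝ (gradient f p) u := by
      rw [real_inner_smul_right]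
    have e2 : ‖-(1 / L) • u‖ ^ 2 = (1 / L) ^ 2 * ‖u‖ ^ 2 := by
      rw [norm_smul]
      simp only [Real.norm_eq_abs, abs_neg, abs_div, abs_one, abs_of_pos hL]
      ring
    have e3 : (inner ℝ (gradient f q) (p + -(1 / L) • u - q) : ℝ) =
        inner ℝ (gradient f q) (p - q) + -(1 / L) * inner ℝ (gradient f q) u := by
      have : p + -(1 / L) • u - q = (p - q) + (-(1 / L) • u) := by abel
      rw [this, inner_add_right, real_inner_smul_right]
    have e4 : (inner ℝ (gradient f p) u : ℝ) - inner ℝ (gradient f q) u = ‖u‖ ^ 2 := by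
      rw [← inner_sub_left, ← hu, real_inner_self_eq_norm_sq]
    have e5 : L / 2 * ((1 / L) ^ 2 * ‖u‖ ^ 2) = 1 / (2 * L) * ‖u‖ ^ 2 := by
      field_simp
    rw [e2] at hdesc
    rw [e3] at hlow
    rw [e1] at hdesc
    have e4' : 1 / L * ((inner ℝ (gradient f p) u : ℝ) - inner ℝ (gradient f q) u) =
        1 / L * ‖u‖ ^ 2 := by rw [e4]
    have e8 : 1 / L * ‖u‖ ^ 2 = 1 / (2 * L) * ‖u‖ ^ 2 + 1 / (2 * L) * ‖u‖ ^ 2 := by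
      field_simp
      ring
    nlinarith [hdesc, hlow, e4', e5, e8]
  have h1 := half x x'
  have h2 := half x' x
  have hnorm : ‖gradient f x' - gradient f x‖ = ‖gradient f x - gradient f x'‖ :=
    norm_sub_rev _ _
  rw [hnorm] at h2
  have e6 : (inner ℝ (gradient f x) (x' - x) : ℝ) = -inner ℝ (gradient f x) (x - x') := by
    rw [show x' - x = -(x - x') by abel, inner_neg_right]
  rw [e6] at h2
  have e7 : (inner ℝ (gradient f x - gradient f x') (x - x') : ℝ) =
      inner ℝ (gradient f x) (x - x') - inner ℝ (gradient f x') (x - x') := by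
    rw [inner_sub_left]
  have h9 : 1 / L * ‖gradient f x - gradient f x'‖ ^ 2 ≤
      (inner ℝ (gradient f x - gradient f x') (x - x') : ℝ) := by
    rw [e7]
    have : 1 / L = 1 / (2 * L) + 1 / (2 * L) := by field_simp; ring
    rw [this]
    linarith
  calc ‖gradient f x - gradient f x'‖ ^ 2
      = L * (1 / L * ‖gradient f x - gradient f x'‖ ^ 2) := by field_simp
    _ ≤ L * (inner ℝ (gradient f x - gradient f x') (x - x') : ℝ) :=
        mul_le_mul_of_nonneg_left h9 hL.le



set_option maxHeartbeats 2000000 in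
/-- Under condition C3 (`f`, `g` convex and smooth, `A` square with
`λ_min(AᵀA) = λ_min(AAᵀ) > 0`), the saddle-point operator
`F(x,y) = (∇f(x) + Aᵀy, ∇g(y) - Ax)` is inverse Lipschitz: there exists `c = 1/R₃ > 0`
with `‖F(ω) - F(ω')‖ ≥ c‖ω - ω'‖` for all `ω, ω'`. -/
theorem saddle_operator_inverseLipschitz_C3
    (n : ℕ) (Lf Lg : ℝ) (hLf : 0 ≤ Lf) (hLg : 0 ≤ Lg)
    (A : Matrix (Fin n) (Fin n) ℝ)
    (hA : 0 < lambdaMin (Aᵀ * A)) (hAA : lambdaMin (Aᵀ * A) = lambdaMin (A * Aᵀ))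
    (f g : Evec n → ℝ)
    (hdf : ∀ x, HasGradientAt f (gradient f x) x)
    (hdg : ∀ y, HasGradientAt g (gradient g y) y)
    (hfconv : ∀ x x', (0 : ℝ) ≤ (inner ℝ (gradient f x - gradient f x') (x - x') : ℝ))
    (hgconv : ∀ y y', (0 : ℝ) ≤ (inner ℝ (gradient g y - gradient g y') (y - y') : ℝ))
    (hfsmooth : ∀ x x', ‖gradient f x - gradient f x'‖ ≤ Lf * ‖x - x'‖)
    (hgsmooth : ∀ y y', ‖gradient g y - gradient g y'‖ ≤ Lg * ‖y - y'‖) :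
    ∃ c > (0 : ℝ), ∀ x x' y y' : Evec n,
      c * Real.sqrt (‖x - x'‖ ^ 2 + ‖y - y'‖ ^ 2) ≤
        Real.sqrt
          (‖(gradient f x + Matrix.toEuclideanLin Aᵀ y) -
              (gradient f x' + Matrix.toEuclideanLin Aᵀ y')‖ ^ 2 +
            ‖(gradient g y - Matrix.toEuclideanLin A x) -
              (gradient g y' - Matrix.toEuclideanLin A x')‖ ^ 2) := by
  set μ : ℝ := lambdaMin (Aᵀ * A) with hμdef
  have hμ : 0 < μ := hA
  set L : ℝ := max Lf Lg + 1 with hLdef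
  have hL : 0 < L := by
    have : (0:ℝ) ≤ max Lf Lg := le_max_of_le_left hLf
    linarith
  have hLfL : ∀ x x', ‖gradient f x - gradient f x'‖ ≤ L * ‖x - x'‖ := by
    intro x x'
    calc ‖gradient f x - gradient f x'‖ ≤ Lf * ‖x - x'‖ := hfsmooth x x'
      _ ≤ L * ‖x - x'‖ := by
          apply mul_le_mul_of_nonneg_right _ (norm_nonneg _)
          have := le_max_left Lf Lg
          linarith
  have hLgL : ∀ y y', ‖gradient g y - gradient g y'‖ ≤ L * ‖y - y'‖ := by
    intro y y'
    calc ‖gradient g y - gradient g y'‖ ≤ Lg * ‖y - y'‖ := hgsmooth y y'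
      _ ≤ L * ‖y - y'‖ := by
          apply mul_le_mul_of_nonneg_right _ (norm_nonneg _)
          have := le_max_right Lf Lg
          linarith
  have hcontf : Continuous (gradient f) := grad_cont f Lf hLf hfsmooth
  have hcontg : Continuous (gradient g) := grad_cont g Lg hLg hgsmooth
  set K : ℝ := ‖(Matrix.toEuclideanLin A).toContinuousLinearMap‖ +
      ‖(Matrix.toEuclideanLin Aᵀ).toContinuousLinearMap‖ + 1 with hKdef
  have hK : 0 < K := by positivity
  have hKA : ∀ v : Evec n, ‖Matrix.toEuclideanLin A v‖ ≤ K * ‖v‖ := by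
    intro v
    have h1 := (Matrix.toEuclideanLin A).toContinuousLinearMap.le_opNorm v
    have h2 : (Matrix.toEuclideanLin A).toContinuousLinearMap v =
        Matrix.toEuclideanLin A v := rfl
    rw [h2] at h1
    refine h1.trans ?_
    apply mul_le_mul_of_nonneg_right _ (norm_nonneg _)
    have := norm_nonneg (Matrix.toEuclideanLin Aᵀ).toContinuousLinearMap
    rw [hKdef]; linarith
  have hKAT : ∀ v : Evec n, ‖Matrix.toEuclideanLin Aᵀ v‖ ≤ K * ‖v‖ := by
    intro v
    have h1 := (Matrix.toEuclideanLin Aᵀ).toContinuousLinearMap.le_opNorm v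
    have h2 : (Matrix.toEuclideanLin Aᵀ).toContinuousLinearMap v =
        Matrix.toEuclideanLin Aᵀ v := rfl
    rw [h2] at h1
    refine h1.trans ?_
    apply mul_le_mul_of_nonneg_right _ (norm_nonneg _)
    have := norm_nonneg (Matrix.toEuclideanLin A).toContinuousLinearMap
    rw [hKdef]; linarith
  set ε : ℝ := μ / (L * K ^ 2) with hεdef
  have hε : 0 < ε := by positivity
  have hεK : ε * (L * K ^ 2) = μ := by
    rw [hεdef]
    field_simp
  set c : ℝ := ε * μ / (4 * (1 + ε * K)) with hcdef
  have h1εK : 0 < 1 + ε * K := by positivity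
  have hc : 0 < c := by positivity
  refine ⟨c, hc, ?_⟩
  intro x x' y y'
  set a : Evec n := x - x' with hadef
  set b : Evec n := y - y' with hbdef
  set u : Evec n := gradient f x - gradient f x' with hudef
  set v : Evec n := gradient g y - gradient g y' with hvdef
  set Aa : Evec n := Matrix.toEuclideanLin A a with hAadef
  set Atb : Evec n := Matrix.toEuclideanLin Aᵀ b with hAtbdef
  set p : Evec n := u + Atb with hpdef
  set q : Evec n := v - Aa with hqdef
  have hp : (gradient f x + Matrix.toEuclideanLin Aᵀ y) -
      (gradient f x' + Matrix.toEuclideanLin Aᵀ y') = p := by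
    rw [hpdef, hudef, hAtbdef, hbdef, map_sub]
    abel
  have hq : (gradient g y - Matrix.toEuclideanLin A x) -
      (gradient g y' - Matrix.toEuclideanLin A x') = q := by
    rw [hqdef, hvdef, hAadef, hadef, map_sub]
    abel
  rw [hp, hq]
  set M : ℝ := Real.sqrt (‖a‖ ^ 2 + ‖b‖ ^ 2) with hMdef
  set N : ℝ := Real.sqrt (‖p‖ ^ 2 + ‖q‖ ^ 2) with hNdef
  have hM0 : 0 ≤ M := Real.sqrt_nonneg _
  have hN0 : 0 ≤ N := Real.sqrt_nonneg _
  have hMsq : M ^ 2 = ‖a‖ ^ 2 + ‖b‖ ^ 2 := Real.sq_sqrt (by positivity)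
  have hNsq : N ^ 2 = ‖p‖ ^ 2 + ‖q‖ ^ 2 := Real.sq_sqrt (by positivity)
  have haM : ‖a‖ ≤ M := Real.le_sqrt_of_sq_le (by nlinarith [sq_nonneg ‖b‖])
  have hbM : ‖b‖ ≤ M := Real.le_sqrt_of_sq_le (by nlinarith [sq_nonneg ‖a‖])
  have hpN : ‖p‖ ≤ N := Real.le_sqrt_of_sq_le (by nlinarith [sq_nonneg ‖q‖])
  have hqN : ‖q‖ ≤ N := Real.le_sqrt_of_sq_le (by nlinarith [sq_nonneg ‖p‖])
  -- cocoercivity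
  have hu2 : ‖u‖ ^ 2 ≤ L * (inner ℝ u a : ℝ) :=
    grad_cocoercive f L hL hdf hcontf hfconv hLfL x x'
  have hv2 : ‖v‖ ^ 2 ≤ L * (inner ℝ v b : ℝ) :=
    grad_cocoercive g L hL hdg hcontg hgconv hLgL y y'
  -- eigenvalue bounds
  have hAa_lo : μ * ‖a‖ ^ 2 ≤ ‖Aa‖ ^ 2 := by
    have := lambdaMin_le (Aᵀ * A) a
    rw [qform_transpose_mul] at this
    exact this
  have hAtb_lo : μ * ‖b‖ ^ 2 ≤ ‖Atb‖ ^ 2 := by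
    have h1 := lambdaMin_le (A * Aᵀ) b
    have h2 := qform_transpose_mul Aᵀ b
    rw [transpose_transpose] at h2
    rw [h2] at h1
    rw [hAA]
    exact h1
  have hAaK : ‖Aa‖ ≤ K * ‖a‖ := hKA a
  have hAtbK : ‖Atb‖ ≤ K * ‖b‖ := hKAT b
  -- inner ℝ product identities
  have hadj : (inner ℝ Atb a : ℝ) = inner ℝ Aa b := by
    rw [hAtbdef, inner_transpose_apply, hAadef, real_inner_comm]
  have hpa : (inner ℝ p a : ℝ) = inner ℝ u a + inner ℝ Atb a := by
    rw [hpdef, inner_add_left]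
  have hqb : (inner ℝ q b : ℝ) = inner ℝ v b - inner ℝ Aa b := by
    rw [hqdef, inner_sub_left]
  have hpAtb : (inner ℝ p Atb : ℝ) = inner ℝ u Atb + ‖Atb‖ ^ 2 := by
    rw [hpdef, inner_add_left, real_inner_self_eq_norm_sq]
  have hqAa : (inner ℝ q Aa : ℝ) = inner ℝ v Aa - ‖Aa‖ ^ 2 := by
    rw [hqdef, inner_sub_left, real_inner_self_eq_norm_sq]
  -- cross bounds
  have hcr1 : -(‖u‖ * ‖Atb‖) ≤ (inner ℝ u Atb : ℝ) := by
    have := abs_real_inner_le_norm u Atb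
    have h2 := neg_abs_le (inner ℝ u Atb : ℝ)
    linarith
  have hcr2 : (inner ℝ v Aa : ℝ) ≤ ‖v‖ * ‖Aa‖ := real_inner_le_norm _ _
  -- define S
  set S : ℝ := (inner ℝ u a : ℝ) + (inner ℝ v b : ℝ) + ε * (‖Atb‖ ^ 2 + ‖Aa‖ ^ 2) +
      ε * ((inner ℝ u Atb : ℝ) - (inner ℝ v Aa : ℝ)) with hSdef
  -- lower bound on S
  have hA1 : -(‖u‖ ^ 2) - (L * ε) ^ 2 * ‖Atb‖ ^ 2 ≤ 2 * L * ε * (inner ℝ u Atb : ℝ) := by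
    have t1 : 2 * (L * ε) * (‖u‖ * ‖Atb‖) ≤ ‖u‖ ^ 2 + (L * ε) ^ 2 * ‖Atb‖ ^ 2 := by
      linarith only [two_mul_le_add_sq ‖u‖ ((L * ε) * ‖Atb‖)]
    have t2 : (2 * L * ε) * (-(‖u‖ * ‖Atb‖)) ≤ (2 * L * ε) * (inner ℝ u Atb : ℝ) :=
      mul_le_mul_of_nonneg_left hcr1 (by positivity)
    linarith only [t1, t2]
  have hA2 : 2 * L * ε * (inner ℝ v Aa : ℝ) ≤ ‖v‖ ^ 2 + (L * ε) ^ 2 * ‖Aa‖ ^ 2 := by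
    have t1 : 2 * (L * ε) * (‖v‖ * ‖Aa‖) ≤ ‖v‖ ^ 2 + (L * ε) ^ 2 * ‖Aa‖ ^ 2 := by
      linarith only [two_mul_le_add_sq ‖v‖ ((L * ε) * ‖Aa‖)]
    have t2 : (2 * L * ε) * (inner ℝ v Aa : ℝ) ≤ (2 * L * ε) * (‖v‖ * ‖Aa‖) :=
      mul_le_mul_of_nonneg_left hcr2 (by positivity)
    linarith only [t1, t2]
  have hB1b : 2 * (L * ε) * (μ * ‖b‖ ^ 2) ≤ 2 * (L * ε) * ‖Atb‖ ^ 2 :=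
    mul_le_mul_of_nonneg_left hAtb_lo (by positivity)
  have hB1a : 2 * (L * ε) * (μ * ‖a‖ ^ 2) ≤ 2 * (L * ε) * ‖Aa‖ ^ 2 :=
    mul_le_mul_of_nonneg_left hAa_lo (by positivity)
  have hB2b : (L * ε) ^ 2 * ‖Atb‖ ^ 2 ≤ (L * ε) ^ 2 * (K ^ 2 * ‖b‖ ^ 2) := by
    apply mul_le_mul_of_nonneg_left _ (by positivity)
    linarith only [mul_self_le_mul_self (norm_nonneg Atb) hAtbK, sq_nonneg ‖Atb‖,
      sq_nonneg (K * ‖b‖), sq_abs ‖Atb‖]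
  have hB2a : (L * ε) ^ 2 * ‖Aa‖ ^ 2 ≤ (L * ε) ^ 2 * (K ^ 2 * ‖a‖ ^ 2) := by
    apply mul_le_mul_of_nonneg_left _ (by positivity)
    linarith only [mul_self_le_mul_self (norm_nonneg Aa) hAaK, sq_nonneg ‖Aa‖,
      sq_nonneg (K * ‖a‖), sq_abs ‖Aa‖]
  have hB3 : ∀ r : ℝ, (L * ε) ^ 2 * (K ^ 2 * r) = L * ε * μ * r := by
    intro r
    rw [← hεK]
    ring
  have key1 : L * ε * μ * (‖a‖ ^ 2 + ‖b‖ ^ 2) ≤ 2 * L * S := by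
    rw [hSdef]
    linarith only [hu2, hv2, hA1, hA2, hB1b, hB1a, hB2b, hB2a, hB3 (‖b‖ ^ 2), hB3 (‖a‖ ^ 2),
      sq_nonneg ‖u‖, sq_nonneg ‖v‖]
  -- upper bound on S
  have hm1 : ‖p‖ * ‖a‖ ≤ N * M := mul_le_mul hpN haM (norm_nonneg _) hN0
  have hm2 : ‖q‖ * ‖b‖ ≤ N * M := mul_le_mul hqN hbM (norm_nonneg _) hN0
  have hm3 : ‖p‖ * ‖b‖ ≤ N * M := mul_le_mul hpN hbM (norm_nonneg _) hN0
  have hm4 : ‖q‖ * ‖a‖ ≤ N * M := mul_le_mul hqN haM (norm_nonneg _) hN0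
  have hup1 : (inner ℝ p a : ℝ) ≤ N * M := (real_inner_le_norm _ _).trans hm1
  have hup2 : (inner ℝ q b : ℝ) ≤ N * M := (real_inner_le_norm _ _).trans hm2
  have hup3 : (inner ℝ p Atb : ℝ) ≤ K * (N * M) := by
    have t1 : (inner ℝ p Atb : ℝ) ≤ ‖p‖ * ‖Atb‖ := real_inner_le_norm _ _
    have t2 : ‖p‖ * ‖Atb‖ ≤ ‖p‖ * (K * ‖b‖) :=
      mul_le_mul_of_nonneg_left hAtbK (norm_nonneg _)
    have t3 : K * (‖p‖ * ‖b‖) ≤ K * (N * M) := mul_le_mul_of_nonneg_left hm3 hK.le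
    linarith only [t1, t2, t3]
  have hup4 : -(inner ℝ q Aa : ℝ) ≤ K * (N * M) := by
    have t1 : -(inner ℝ q Aa : ℝ) ≤ ‖q‖ * ‖Aa‖ := by
      have := abs_real_inner_le_norm q Aa
      have h2 := neg_abs_le (inner ℝ q Aa : ℝ)
      linarith
    have t2 : ‖q‖ * ‖Aa‖ ≤ ‖q‖ * (K * ‖a‖) :=
      mul_le_mul_of_nonneg_left hAaK (norm_nonneg _)
    have t3 : K * (‖q‖ * ‖a‖) ≤ K * (N * M) := mul_le_mul_of_nonneg_left hm4 hK.le
    linarith only [t1, t2, t3]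
  have hSid : S = (inner ℝ p a : ℝ) + (inner ℝ q b : ℝ) +
      ε * ((inner ℝ p Atb : ℝ) - (inner ℝ q Aa : ℝ)) := by
    rw [hSdef, hpa, hqb, hpAtb, hqAa, hadj]
    ring
  have key2 : S ≤ 2 * (1 + ε * K) * (N * M) := by
    rw [hSid]
    have t4 : ε * ((inner ℝ p Atb : ℝ) - (inner ℝ q Aa : ℝ)) ≤ ε * (2 * (K * (N * M))) := by
      apply mul_le_mul_of_nonneg_left _ hε.le
      linarith
    linarith only [hup1, hup2, t4]
  -- combine
  have key3 : ε * μ * M ^ 2 ≤ 4 * (1 + ε * K) * (N * M) := by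
    have t1 : 2 * L * S ≤ 2 * L * (2 * (1 + ε * K) * (N * M)) :=
      mul_le_mul_of_nonneg_left key2 (by positivity)
    rw [← hMsq] at key1
    have t2 : L * (ε * μ * M ^ 2) ≤ L * (4 * (1 + ε * K) * (N * M)) := by linarith only [key1, t1]
    exact le_of_mul_le_mul_left t2 hL
  rcases eq_or_lt_of_le hM0 with hM0' | hMpos
  · rw [← hM0']
    simpa using hN0
  · rw [hcdef, div_mul_eq_mul_div, div_le_iff₀ (by positivity)]
    have t3 : (ε * μ * M) * M ≤ (N * (4 * (1 + ε * K))) * M := by linarith only [key3, hM0, hN0]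
    exact le_of_mul_le_mul_right t3 hMpos
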